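/- Let A̅ be a commutative ring, I a free A̅-module, S = Sym_{A̅}(I), Ĩ the augmentation ideal, and J = Ĩ². Then the kernel of the natural map J/J² → Ω¹_{S}/J·Ω¹_{S} induced by the universal derivation d is exactly Ĩ³/Ĩ⁴. -/

import Mathlib

open MvPolynomial

section Aux

variable {R : Type*} [CommRing R] {σ : Type*}

/-- Coefficients of a partial derivative. -/
lemma aux_coeff_pderiv (i : σ) (m : σ →₀ ℕ) (f : MvPolynomial σ R) :
    coeff m (pderiv i f) =
      ((m i + 1 : ℕ) : R) * coeff (m + Finsupp.single i 1) f := by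
  classical
  induction f using MvPolynomial.induction_on' with
  | monomial s a =>
    rw [pderiv_monomial, coeff_monomial, coeff_monomial]
    by_cases h : s = m + Finsupp.single i 1
    · subst h
      have h1 : (m + Finsupp.single i 1) - Finsupp.single i 1 = m := by
        simp
      have h2 : ((m + Finsupp.single i 1) : σ →₀ ℕ) i = m i + 1 := by
        rw [Finsupp.add_apply, Finsupp.single_apply]
        simp
      rw [h1, h2, if_pos rfl, if_pos rfl]
      push_cast
      ring
    · rw [if_neg h]
      by_cases h' : s - Finsupp.single i 1 = m
      · rw [if_pos h']
        have hsi : s i = 0 := by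
          by_contra hsi
          apply h
          rw [← h']
          rw [tsub_add_cancel_of_le]
          rw [Finsupp.single_le_iff]
          omega
        simp [hsi]
      · rw [if_neg h', mul_zero]
  | add p q hp hq =>
    simp [hp, hq, mul_add]

/-- monomials of degree `d` lie in the `d`-th power of the augmentation ideal. -/
lemma aux_monomial_mem (m : σ →₀ ℕ) (c : R) :
    monomial m c ∈
      (RingHom.ker (constantCoeff : MvPolynomial σ R →+* R)) ^
        (m.sum fun _ k => k) := by
  classical
  induction m using Finsupp.induction with
  | zero => simp
  | single_add a b s ha hb ih =>
    have hdeg : ((Finsupp.single a b + s).sum fun _ k => k) =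
        b + (s.sum fun _ k => k) := by
      rw [Finsupp.sum_add_index (by simp) (by simp)]
      simp
    have hmon : (monomial (Finsupp.single a b + s) c : MvPolynomial σ R) =
        (X a) ^ b * monomial s c := by
      rw [X_pow_eq_monomial, monomial_mul, one_mul]
    rw [hdeg, hmon, pow_add]
    exact Ideal.mul_mem_mul
      (Ideal.pow_mem_pow (by simp [RingHom.mem_ker]) b) ih

/-- polynomials with vanishing low coefficients lie in powers of the
augmentation ideal. -/
lemma aux_mem_pow (n : ℕ) (p : MvPolynomial σ R)
    (h : ∀ m : σ →₀ ℕ, (m.sum fun _ k => k) < n → coeff m p = 0) :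
    p ∈ (RingHom.ker (constantCoeff : MvPolynomial σ R →+* R)) ^ n := by
  classical
  rw [MvPolynomial.as_sum p]
  refine Ideal.sum_mem _ fun m hm => ?_
  by_cases hd : (m.sum fun _ k => k) < n
  · rw [h m hd]; simp
  · exact Ideal.pow_le_pow_right (le_of_not_gt hd) (aux_monomial_mem m _)

/-- conversely, membership in powers of the augmentation ideal forces low
coefficients to vanish. -/
lemma aux_coeff_eq_zero {n : ℕ} {p : MvPolynomial σ R}
    (hp : p ∈ (RingHom.ker (constantCoeff : MvPolynomial σ R →+* R)) ^ n) :
    ∀ m : σ →₀ ℕ, (m.sum fun _ k => k) < n → coeff m p = 0 := by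
  classical
  induction n generalizing p with
  | zero => exact fun m hm => absurd hm (by omega)
  | succ n ih =>
    rw [pow_succ] at hp
    refine Submodule.mul_induction_on hp ?_ ?_
    · intro q hq r hr m hm
      rw [coeff_mul]
      refine Finset.sum_eq_zero fun x hx => ?_
      rw [Finset.HasAntidiagonal.mem_antidiagonal] at hx
      by_cases hx1 : (x.1.sum fun _ k => k) < n
      · rw [ih hq x.1 hx1, zero_mul]
      · have hsum : (x.1.sum fun _ k => k) + (x.2.sum fun _ k => k) =
            (m.sum fun _ k => k) := by
          rw [← hx, Finsupp.sum_add_index (by simp) (by simp)]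
        have hx2 : (x.2.sum fun _ k => k) = 0 := by omega
        have hx20 : x.2 = 0 := by
          ext j
          by_cases hj : j ∈ x.2.support
          · have := Finset.sum_eq_zero_iff.mp hx2 j hj
            simpa using this
          · simpa using Finsupp.notMem_support_iff.mp hj
        rw [hx20]
        have : coeff 0 r = 0 := hr
        rw [this, mul_zero]
    · intro a b ha hb m hm
      rw [coeff_add, ha m hm, hb m hm, add_zero]

/-- membership in `q • ⊤` can be read off from the coordinates w.r.t. a
basis. -/
lemma aux_mem_smul_top_iff {S M ι : Type*} [CommRing S] [AddCommGroup M]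
    [Module S M] (b : Module.Basis ι S M) (q : Ideal S) (x : M) :
    x ∈ q • (⊤ : Submodule S M) ↔ ∀ i, b.repr x i ∈ q := by
  constructor
  · intro hx
    refine Submodule.smul_induction_on hx ?_ ?_
    · intro a ha m _ i
      rw [map_smul]
      exact Ideal.mul_mem_right _ _ ha
    · intro y z hy hz i
      rw [map_add]
      exact Ideal.add_mem _ (hy i) (hz i)
  · intro hx
    have hrepr := b.linearCombination_repr x
    rw [← hrepr, Finsupp.linearCombination_apply, Finsupp.sum]
    refine Submodule.sum_mem _ fun i hi => ?_
    exact Submodule.smul_mem_smul (hx i) trivial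

lemma aux_cast_mul_eq_zero [Algebra ℚ R] {n : ℕ} (hn : n ≠ 0) {c : R}
    (h : (n : R) * c = 0) : c = 0 := by
  have h1 : algebraMap ℚ R ((n : ℚ)⁻¹) * ((n : R) * c) = c := by
    rw [← mul_assoc]
    have : (n : R) = algebraMap ℚ R (n : ℚ) := by
      rw [map_natCast]
    rw [this, ← map_mul, inv_mul_cancel₀ (by exact_mod_cast hn), map_one,
      one_mul]
  rw [h, mul_zero] at h1
  exact h1.symm

end Aux

/-- Let `S = Sym(I)` be the symmetric algebra of a free module (realized as a
polynomial ring over the `ℚ`-algebra `R`), `Ĩ` its augmentation ideal and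
`J = Ĩ²`.  The kernel of the map `J/J² → Ω¹_S/J·Ω¹_S`, `[j] ↦ [dj]`, is exactly
`Ĩ³/Ĩ⁴`; elementwise, for `j ∈ J = Ĩ²` one has `dj ∈ J·Ω¹_S` iff `j ∈ Ĩ³`. -/
theorem symAlg_conormal_kernel (R : Type*) [CommRing R] [Algebra ℚ R]
    (σ : Type*) :
    letI Itilde : Ideal (MvPolynomial σ R) :=
      RingHom.ker (constantCoeff : MvPolynomial σ R →+* R)
    ∀ j ∈ Itilde ^ 2,
      (KaehlerDifferential.D R (MvPolynomial σ R) j ∈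
          (Itilde ^ 2) •
            (⊤ : Submodule (MvPolynomial σ R)
              (KaehlerDifferential R (MvPolynomial σ R)))) ↔
        j ∈ Itilde ^ 3 := by
  classical
  intro j hj
  rw [aux_mem_smul_top_iff (KaehlerDifferential.mvPolynomialBasis R σ)]
  simp only [KaehlerDifferential.mvPolynomialBasis_repr_apply]
  constructor
  · intro h
    refine aux_mem_pow 3 j fun m hm => ?_
    by_cases hm2 : (m.sum fun _ k => k) < 2
    · exact aux_coeff_eq_zero hj m hm2
    · -- degree of m is exactly 2; pick a variable occurring in m
      have hm0 : m ≠ 0 := by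
        intro h0
        rw [h0] at hm2
        simp at hm2
      obtain ⟨i, hi⟩ := Finsupp.support_nonempty_iff.mpr hm0
      have hmi : 1 ≤ m i := by
        have := Finsupp.mem_support_iff.mp hi
        omega
      set m' := m - Finsupp.single i 1 with hm'
      have hm'add : m' + Finsupp.single i 1 = m :=
        tsub_add_cancel_of_le (Finsupp.single_le_iff.mpr hmi)
      have hm'deg : (m'.sum fun _ k => k) + 1 = (m.sum fun _ k => k) := by
        rw [← hm'add, Finsupp.sum_add_index (by simp) (by simp)]
        simp
      have h1 : coeff m' (pderiv i j) = 0 :=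
        aux_coeff_eq_zero (h i) m' (by omega)
      rw [aux_coeff_pderiv, hm'add] at h1
      exact aux_cast_mul_eq_zero (by omega) h1
  · intro h i
    refine aux_mem_pow 2 (pderiv i j) fun m hm => ?_
    rw [aux_coeff_pderiv]
    have hdeg : ((m + Finsupp.single i 1).sum fun _ k => k) =
        (m.sum fun _ k => k) + 1 := by
      rw [Finsupp.sum_add_index (by simp) (by simp)]
      simp
    rw [aux_coeff_eq_zero h _ (by omega), mul_zero]
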